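/- A player-centered incomplete cooperative game (N, K, v) is P-extendable (admits an extension to a positive game on all of 2^N) if and only if it is positive, i.e., its Möbius transform m^v(S) = Σ_{T⊆S, T∈K} (-1)^{|S\T|} v(T) is nonnegative for all S ∈ K. -/

import Mathlib

open Finset

/-- Möbius transform of a (complete) cooperative game `w : 2^N → ℝ`. -/
noncomputable def mobius {α : Type*} [DecidableEq α] (w : Finset α → ℝ) (T : Finset α) : ℝ :=
  ∑ S ∈ T.powerset, (-1 : ℝ) ^ (T.card - S.card) * w S

/-- Möbius transform of an `i`-centered incomplete game `v`, defined for `S ∈ K`,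
where `K = {S : i ∈ S} ∪ {∅}`: `m^v(S) = Σ_{T ⊆ S, T ∈ K} (-1)^{|S \ T|} v(T)`. -/
noncomputable def mobiusK {α : Type*} [DecidableEq α] (i : α) (v : Finset α → ℝ)
    (S : Finset α) : ℝ :=
  ∑ T ∈ S.powerset.filter (fun T => i ∈ T ∨ T = ∅), (-1 : ℝ) ^ ((S \ T).card) * v T

section Aux

variable {α : Type*} [DecidableEq α]


lemma base (A : Finset α) : ∑ R ∈ A.powerset, (-1:ℝ)^R.card = if A = ∅ then 1 else 0 := by
  have := Finset.sum_powerset_neg_one_pow_card (x := A)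
  have h2 : ((∑ m ∈ A.powerset, (-1 : ℤ) ^ m.card : ℤ) : ℝ) = ∑ R ∈ A.powerset, (-1:ℝ)^R.card := by
    push_cast; ring_nf
  rw [← h2, this]
  split <;> norm_num

lemma ivl (U S : Finset α) (hUS : U ⊆ S) :
    ∑ T ∈ S.powerset.filter (fun T => U ⊆ T), (-1:ℝ)^(S.card - T.card)
      = if U = S then 1 else 0 := by
  have hiff : U = S ↔ S \ U = ∅ := by
    rw [sdiff_eq_empty_iff_subset]
    exact ⟨fun h => h ▸ Subset.rfl, fun h => Finset.Subset.antisymm hUS h⟩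
  rw [show (if U = S then (1:ℝ) else 0) = if S \ U = ∅ then 1 else 0 by
    by_cases h : U = S
    · rw [if_pos h, if_pos (hiff.mp h)]
    · rw [if_neg h, if_neg (fun hh => h (hiff.mpr hh))]]
  rw [← base (S \ U)]
  refine Finset.sum_nbij' (fun T => S \ T) (fun R => S \ R) ?_ ?_ ?_ ?_ ?_
  · intro T hT
    simp only [mem_filter, mem_powerset] at hT
    simp only [mem_powerset]
    exact sdiff_subset_sdiff Subset.rfl hT.2
  · intro R hR
    simp only [mem_powerset] at hR
    simp only [mem_filter, mem_powerset]
    constructor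
    · exact sdiff_subset
    · intro x hx
      have hxS := hUS hx
      simp only [mem_sdiff]
      refine ⟨hxS, fun hxR => ?_⟩
      have := hR hxR
      simp [hx] at this
  · intro T hT
    simp only [mem_filter, mem_powerset] at hT
    exact Finset.sdiff_sdiff_eq_self hT.1
  · intro R hR
    simp only [mem_powerset] at hR
    exact Finset.sdiff_sdiff_eq_self (hR.trans sdiff_subset)
  · intro T hT
    simp only [mem_filter, mem_powerset] at hT
    rw [card_sdiff_of_subset hT.1]


lemma ivl' (U S : Finset α) (hUS : U ⊆ S) :
    ∑ T ∈ S.powerset.filter (fun T => U ⊆ T), (-1:ℝ)^(T.card - U.card)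
      = if U = S then 1 else 0 := by
  have hiff : U = S ↔ S \ U = ∅ := by
    rw [sdiff_eq_empty_iff_subset]
    exact ⟨fun h => h ▸ Subset.rfl, fun h => Finset.Subset.antisymm hUS h⟩
  rw [show (if U = S then (1:ℝ) else 0) = if S \ U = ∅ then 1 else 0 by
    by_cases h : U = S
    · rw [if_pos h, if_pos (hiff.mp h)]
    · rw [if_neg h, if_neg (fun hh => h (hiff.mpr hh))]]
  rw [← base (S \ U)]
  refine Finset.sum_nbij' (fun T => T \ U) (fun R => R ∪ U) ?_ ?_ ?_ ?_ ?_
  · intro T hT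
    simp only [mem_filter, mem_powerset] at hT
    simp only [mem_powerset]
    exact sdiff_subset_sdiff hT.1 Subset.rfl
  · intro R hR
    simp only [mem_powerset] at hR
    simp only [mem_filter, mem_powerset]
    exact ⟨union_subset (hR.trans sdiff_subset) hUS, subset_union_right⟩
  · intro T hT
    simp only [mem_filter, mem_powerset] at hT
    show T \ U ∪ U = T
    exact sdiff_union_of_subset hT.2
  · intro R hR
    simp only [mem_powerset] at hR
    show (R ∪ U) \ U = R
    rw [union_sdiff_right]
    exact sdiff_eq_self_of_disjoint (disjoint_of_subset_left hR sdiff_disjoint)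
  · intro T hT
    simp only [mem_filter, mem_powerset] at hT
    rw [card_sdiff_of_subset hT.2]

lemma swap_lemma (S : Finset α) (p q : Finset α → Prop) [DecidablePred p] [DecidablePred q]
    (f : Finset α → Finset α → ℝ) :
    ∑ T ∈ S.powerset.filter p, ∑ U ∈ T.powerset.filter q, f T U
      = ∑ U ∈ S.powerset.filter q, ∑ T ∈ S.powerset.filter (fun T => p T ∧ U ⊆ T), f T U := by
  refine Finset.sum_comm' ?_
  intro T U
  simp only [mem_filter, mem_powerset]
  constructor
  · rintro ⟨⟨hTS, hpT⟩, hUT, hqU⟩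
    exact ⟨⟨hTS, hpT, hUT⟩, hUT.trans hTS, hqU⟩
  · rintro ⟨⟨hTS, hpT, hUT⟩, _, hqU⟩
    exact ⟨⟨hTS, hpT⟩, hUT, hqU⟩

lemma mobius_sum (m : Finset α → ℝ) (T : Finset α) :
    mobius (fun S => ∑ U ∈ S.powerset, m U) T = m T := by
  unfold mobius
  have h1 : ∀ S : Finset α, (-1:ℝ)^(T.card - S.card) * ∑ U ∈ S.powerset, m U
      = ∑ U ∈ S.powerset.filter (fun _ => True), (-1:ℝ)^(T.card - S.card) * m U := by
    intro S; rw [Finset.filter_true, mul_sum]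
  calc ∑ S ∈ T.powerset, (-1:ℝ)^(T.card - S.card) * ∑ U ∈ S.powerset, m U
      = ∑ S ∈ T.powerset.filter (fun _ => True),
          ∑ U ∈ S.powerset.filter (fun _ => True), (-1:ℝ)^(T.card - S.card) * m U := by
        rw [Finset.filter_true]; exact Finset.sum_congr rfl fun S _ => h1 S
    _ = ∑ U ∈ T.powerset.filter (fun _ => True),
          ∑ S ∈ T.powerset.filter (fun S => True ∧ U ⊆ S), (-1:ℝ)^(T.card - S.card) * m U :=
        swap_lemma T _ _ _
    _ = m T := by
        rw [Finset.filter_true]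
        rw [Finset.sum_eq_single T]
        · simp only [true_and]
          rw [← Finset.sum_mul, ivl T T Subset.rfl, if_pos rfl, one_mul]
        · intro U hU hUT
          simp only [true_and, ← Finset.sum_mul]
          rw [ivl U T (mem_powerset.mp hU), if_neg hUT, zero_mul]
        · intro h; exact absurd (mem_powerset_self T) h

lemma sum_mobius (w : Finset α → ℝ) (S : Finset α) :
    ∑ T ∈ S.powerset, mobius w T = w S := by
  unfold mobius
  calc ∑ T ∈ S.powerset, ∑ U ∈ T.powerset, (-1:ℝ)^(T.card - U.card) * w U
      = ∑ T ∈ S.powerset.filter (fun _ => True),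
          ∑ U ∈ T.powerset.filter (fun _ => True), (-1:ℝ)^(T.card - U.card) * w U := by
        rw [Finset.filter_true]
        exact Finset.sum_congr rfl fun T _ => by rw [Finset.filter_true]
    _ = ∑ U ∈ S.powerset.filter (fun _ => True),
          ∑ T ∈ S.powerset.filter (fun T => True ∧ U ⊆ T), (-1:ℝ)^(T.card - U.card) * w U :=
        swap_lemma S _ _ _
    _ = w S := by
        rw [Finset.filter_true]
        rw [Finset.sum_eq_single S]
        · simp only [true_and]
          rw [← Finset.sum_mul, ivl' S S Subset.rfl, if_pos rfl, one_mul]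
        · intro U hU hUS
          simp only [true_and, ← Finset.sum_mul]
          rw [ivl' U S (mem_powerset.mp hU), if_neg hUS, zero_mul]
        · intro h; exact absurd (mem_powerset_self S) h

lemma mobiusK_sum (i : α) (m : Finset α → ℝ) (hm : m ∅ = 0) (S : Finset α) (hiS : i ∈ S) :
    mobiusK i (fun X => ∑ U ∈ X.powerset, m U) S = m S + m (S \ {i}) := by
  unfold mobiusK
  have hSne : S ≠ S \ {i} := by
    intro h
    have : i ∈ S \ {i} := h ▸ hiS
    simp at this
  calc ∑ T ∈ S.powerset.filter (fun T => i ∈ T ∨ T = ∅),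
          (-1:ℝ)^((S\T).card) * ∑ U ∈ T.powerset, m U
      = ∑ T ∈ S.powerset.filter (fun T => i ∈ T ∨ T = ∅),
          ∑ U ∈ T.powerset.filter (fun _ => True), (-1:ℝ)^(S.card - T.card) * m U := by
        refine Finset.sum_congr rfl fun T hT => ?_
        rw [Finset.filter_true, mul_sum,
          card_sdiff_of_subset (mem_powerset.mp (mem_filter.mp hT).1)]
    _ = ∑ U ∈ S.powerset.filter (fun _ => True),
          ∑ T ∈ S.powerset.filter (fun T => (i ∈ T ∨ T = ∅) ∧ U ⊆ T),
            (-1:ℝ)^(S.card - T.card) * m U := swap_lemma S _ _ _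
    _ = ∑ U ∈ S.powerset, ((if U = S then m S else 0) + (if U = S \ {i} then m (S \ {i}) else 0)) := by
        rw [Finset.filter_true]
        refine Finset.sum_congr rfl fun U hU => ?_
        have hUS : U ⊆ S := mem_powerset.mp hU
        rw [← Finset.sum_mul]
        by_cases hiU : i ∈ U
        · have hfe : S.powerset.filter (fun T => (i ∈ T ∨ T = ∅) ∧ U ⊆ T)
              = S.powerset.filter (fun T => U ⊆ T) := by
            refine Finset.filter_congr fun T _ => ?_
            constructor
            · exact fun h => h.2
            · exact fun h => ⟨Or.inl (h hiU), h⟩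
          rw [hfe, ivl U S hUS]
          have hUne : U ≠ S \ {i} := fun h => by simp [h] at hiU
          by_cases h : U = S
          · rw [if_pos h, if_pos h, if_neg hUne, one_mul, h, add_zero]
          · rw [if_neg h, if_neg h, if_neg hUne, zero_mul, add_zero]
        · by_cases hUe : U = ∅
          · subst hUe
            rw [hm, mul_zero]
            have h1 : (∅ : Finset α) ≠ S := fun h => by rw [← h] at hiS; simp at hiS
            rw [if_neg h1]
            by_cases h2 : (∅ : Finset α) = S \ {i}
            · rw [if_pos h2, ← h2, hm, add_zero]
            · rw [if_neg h2, add_zero]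
          · have hfe : S.powerset.filter (fun T => (i ∈ T ∨ T = ∅) ∧ U ⊆ T)
                = S.powerset.filter (fun T => insert i U ⊆ T) := by
              refine Finset.filter_congr fun T _ => ?_
              constructor
              · rintro ⟨hi | he, hUT⟩
                · exact insert_subset hi hUT
                · exact absurd (subset_empty.mp (he ▸ hUT)) hUe
              · intro h
                exact ⟨Or.inl (h (mem_insert_self i U)), (subset_insert i U).trans h⟩
            rw [hfe, ivl (insert i U) S (insert_subset hiS hUS)]
            have hkey : insert i U = S ↔ U = S \ {i} := by
              constructor
              · intro h
                rw [← h]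
                simp [Finset.insert_sdiff_of_mem, hiU, Finset.sdiff_singleton_eq_erase, Finset.erase_eq_of_notMem]
              · intro h
                rw [h, sdiff_singleton_eq_erase, insert_erase hiS]
            have hUneS : U ≠ S := fun h => hiU (h ▸ hiS)
            rw [if_neg hUneS]
            by_cases h : insert i U = S
            · rw [if_pos h, if_pos (hkey.mp h), one_mul, hkey.mp h, zero_add]
            · rw [if_neg h, if_neg (fun hh => h (hkey.mpr hh)), zero_mul, add_zero]
    _ = m S + m (S \ {i}) := by
        rw [Finset.sum_add_distrib]
        congr 1
        · rw [Finset.sum_ite_eq' S.powerset S (fun _ => m S), if_pos (mem_powerset_self S)]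
        · rw [Finset.sum_ite_eq' S.powerset (S \ {i}) (fun _ => m (S \ {i})),
            if_pos (mem_powerset.mpr sdiff_subset)]

lemma sum_mobiusK (i : α) (v : Finset α → ℝ) (hv : v ∅ = 0) (S : Finset α) (hiS : i ∈ S) :
    ∑ T ∈ S.powerset.filter (fun T => i ∈ T), mobiusK i v T = v S := by
  unfold mobiusK
  calc ∑ T ∈ S.powerset.filter (fun T => i ∈ T),
          ∑ U ∈ T.powerset.filter (fun U => i ∈ U ∨ U = ∅), (-1:ℝ)^((T\U).card) * v U
      = ∑ T ∈ S.powerset.filter (fun T => i ∈ T),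
          ∑ U ∈ T.powerset.filter (fun U => i ∈ U ∨ U = ∅), (-1:ℝ)^(T.card - U.card) * v U := by
        refine Finset.sum_congr rfl fun T _ => Finset.sum_congr rfl fun U hU => ?_
        rw [card_sdiff_of_subset (mem_powerset.mp (mem_filter.mp hU).1)]
    _ = ∑ U ∈ S.powerset.filter (fun U => i ∈ U ∨ U = ∅),
          ∑ T ∈ S.powerset.filter (fun T => i ∈ T ∧ U ⊆ T), (-1:ℝ)^(T.card - U.card) * v U :=
        swap_lemma S _ _ _
    _ = ∑ U ∈ S.powerset.filter (fun U => i ∈ U ∨ U = ∅), (if U = S then v S else 0) := by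
        refine Finset.sum_congr rfl fun U hU => ?_
        obtain ⟨hUP, hUK⟩ := mem_filter.mp hU
        have hUS : U ⊆ S := mem_powerset.mp hUP
        rw [← Finset.sum_mul]
        rcases hUK with hiU | hUe
        · have hfe : S.powerset.filter (fun T => i ∈ T ∧ U ⊆ T)
              = S.powerset.filter (fun T => U ⊆ T) := by
            refine Finset.filter_congr fun T _ => ?_
            exact ⟨fun h => h.2, fun h => ⟨h hiU, h⟩⟩
          rw [hfe, ivl' U S hUS]
          by_cases h : U = S
          · rw [if_pos h, if_pos h, one_mul, h]
          · rw [if_neg h, if_neg h, zero_mul]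
        · subst hUe
          rw [hv, mul_zero]
          have h1 : (∅ : Finset α) ≠ S := fun h => by rw [← h] at hiS; simp at hiS
          rw [if_neg h1]
    _ = v S := by
        rw [Finset.sum_ite_eq' _ S (fun _ => v S)]
        rw [if_pos (mem_filter.mpr ⟨mem_powerset_self S, Or.inl hiS⟩)]

end Aux

/-- A player-centered incomplete game `(N, K, v)` is P-extendable iff it is positive. -/
theorem stmt0 {α : Type*} [Fintype α] [DecidableEq α] (i : α) (v : Finset α → ℝ)
    (hv : v ∅ = 0) :
    (∃ w : Finset α → ℝ, w ∅ = 0 ∧ (∀ T : Finset α, 0 ≤ mobius w T) ∧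
        (∀ S : Finset α, (i ∈ S ∨ S = ∅) → w S = v S)) ↔
      (∀ S : Finset α, (i ∈ S ∨ S = ∅) → 0 ≤ mobiusK i v S) := by
  constructor
  · rintro ⟨w, hw0, hpos, hagree⟩ S hS
    rcases hS with hiS | rfl
    · have hm0 : mobius w ∅ = 0 := by simp [mobius, hw0]
      have hveq : mobiusK i v S = mobiusK i w S := by
        unfold mobiusK
        refine Finset.sum_congr rfl fun T hT => ?_
        rw [hagree T (mem_filter.mp hT).2]
      have hw : w = fun X => ∑ U ∈ X.powerset, mobius w U :=
        funext fun X => (sum_mobius w X).symm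
      rw [hveq]
      conv_lhs => rw [show (0:ℝ) = 0 + 0 by ring]
      calc (0:ℝ) + 0 ≤ mobius w S + mobius w (S \ {i}) :=
            add_le_add (hpos S) (hpos (S \ {i}))
        _ = mobiusK i w S := by
            conv_rhs => rw [hw]
            rw [mobiusK_sum i (mobius w) hm0 S hiS]
    · unfold mobiusK
      rw [Finset.powerset_empty, Finset.filter_singleton]
      simp [hv]
  · intro hpos
    set m : Finset α → ℝ := fun U => if i ∈ U then mobiusK i v U else 0 with hm
    refine ⟨fun X => ∑ U ∈ X.powerset, m U, ?_, ?_, ?_⟩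
    · simp [hm]
    · intro T
      rw [mobius_sum m T, hm]
      by_cases h : i ∈ T
      · simpa [h] using hpos T (Or.inl h)
      · simp [h]
    · intro S hS
      rcases hS with hiS | rfl
      · show ∑ U ∈ S.powerset, m U = v S
        rw [show ∑ U ∈ S.powerset, m U
            = ∑ U ∈ S.powerset.filter (fun U => i ∈ U), mobiusK i v U by
          rw [Finset.sum_filter]]
        exact sum_mobiusK i v hv S hiS
      · simpa [hm] using hv.symm
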